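/- Let C be a semisimple F-linear pivotal monoidal category with simple unit. Then C is spherical (the left and right traces agree on all endomorphisms) if and only if d(X) = d(X̄) for every object X, where d(X) is the left categorical dimension. -/
import Mathlib


open CategoryTheory MonoidalCategory

/-- A (strict) pivotal structure on a monoidal category: a duality map on objects with
`X̄̄ = X`, chosen duality morphisms `ε(X) : 1 ⟶ X ⊗ X̄` and `ε̄(X) : X ⊗ X̄ ⟶ 1` exhibiting
`X̄` as a two-sided dual of `X`, and a contravariant conjugation on morphisms compatible
with the duality morphisms. -/
structure PivotalData (C : Type*) [Category C] [MonoidalCategory C] where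
  bar : C → C
  bar_bar : ∀ X : C, bar (bar X) = X
  ev : ∀ X : C, 𝟙_ C ⟶ X ⊗ bar X
  coev : ∀ X : C, X ⊗ bar X ⟶ 𝟙_ C
  barHom : ∀ {X Y : C}, (X ⟶ Y) → (bar Y ⟶ bar X)
  barHom_id : ∀ X : C, barHom (𝟙 X) = 𝟙 (bar X)
  barHom_comp : ∀ {X Y Z : C} (f : X ⟶ Y) (g : Y ⟶ Z), barHom (f ≫ g) = barHom g ≫ barHom f
  zig : ∀ X : C,
    (ρ_ X).inv ≫ (X ◁ (ev (bar X) ≫ ((bar X) ◁ eqToHom (bar_bar X)))) ≫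
      (α_ X (bar X) X).inv ≫ (coev X ▷ X) ≫ (λ_ X).hom = 𝟙 X
  zag : ∀ X : C,
    (λ_ X).inv ≫ (ev X ▷ X) ≫ (α_ X (bar X) X).hom ≫
      (X ◁ (((bar X) ◁ eqToHom (bar_bar X).symm) ≫ coev (bar X))) ≫ (ρ_ X).hom = 𝟙 X
  ev_natural : ∀ {X Y : C} (s : X ⟶ Y), ev X ≫ (s ▷ bar X) = ev Y ≫ (Y ◁ barHom s)
  coev_natural : ∀ {X Y : C} (s : X ⟶ Y), (s ▷ bar Y) ≫ coev Y = (X ◁ barHom s) ≫ coev X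

/-- The left trace of an endomorphism in a pivotal category. -/
def PivotalData.trL {C : Type*} [Category C] [MonoidalCategory C] (P : PivotalData C)
    {X : C} (s : X ⟶ X) : 𝟙_ C ⟶ 𝟙_ C :=
  P.ev X ≫ (s ▷ P.bar X) ≫ P.coev X

/-- The right trace of an endomorphism in a pivotal category. -/
def PivotalData.trR {C : Type*} [Category C] [MonoidalCategory C] (P : PivotalData C)
    {X : C} (s : X ⟶ X) : 𝟙_ C ⟶ 𝟙_ C :=
  P.ev (P.bar X) ≫
    ((P.bar X) ◁ (eqToHom (P.bar_bar X) ≫ s ≫ eqToHom (P.bar_bar X).symm)) ≫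
    P.coev (P.bar X)

/-- The (left) categorical dimension of an object. -/
def PivotalData.dim {C : Type*} [Category C] [MonoidalCategory C] (P : PivotalData C)
    (X : C) : 𝟙_ C ⟶ 𝟙_ C :=
  P.trL (𝟙 X)

namespace PivotalData

variable {C : Type*} [Category C] [MonoidalCategory C] (P : PivotalData C)

/-- Bending a morphism `bar Y ⟶ bar X` back to a morphism `X ⟶ Y`. -/
def psi {X Y : C} (t : P.bar Y ⟶ P.bar X) : X ⟶ Y :=
  (λ_ X).inv ≫ (P.ev Y ▷ X) ≫ (α_ Y (P.bar Y) X).hom ≫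
    (Y ◁ ((t ▷ X) ≫ (P.bar X ◁ eqToHom (P.bar_bar X).symm) ≫ P.coev (P.bar X))) ≫ (ρ_ Y).hom

lemma psi_barHom {X Y : C} (s : X ⟶ Y) : P.psi (P.barHom s) = s := by
  unfold psi
  rw [MonoidalCategory.whiskerLeft_comp]
  slice_lhs 3 4 => rw [← associator_naturality_middle]
  slice_lhs 2 3 => rw [← comp_whiskerRight, ← P.ev_natural s, comp_whiskerRight]
  slice_lhs 3 4 => rw [associator_naturality_left]
  slice_lhs 4 5 => rw [← whisker_exchange]
  slice_lhs 5 6 => rw [rightUnitor_naturality]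
  slice_lhs 1 5 => rw [P.zag X]
  simp

lemma zag' (Y : C) :
    (λ_ (P.bar (P.bar Y))).inv ≫ (P.ev Y ▷ (P.bar (P.bar Y))) ≫
      (α_ Y (P.bar Y) (P.bar (P.bar Y))).hom ≫ (Y ◁ P.coev (P.bar Y)) ≫ (ρ_ Y).hom =
    eqToHom (P.bar_bar Y) := by
  have h : eqToHom (P.bar_bar Y) ≫ ((λ_ Y).inv ≫ (P.ev Y ▷ Y) ≫ (α_ Y (P.bar Y) Y).hom ≫
      (Y ◁ (((P.bar Y) ◁ eqToHom (P.bar_bar Y).symm) ≫ P.coev (P.bar Y))) ≫ (ρ_ Y).hom) =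
      eqToHom (P.bar_bar Y) := by rw [P.zag Y, Category.comp_id]
  rw [← h, MonoidalCategory.whiskerLeft_comp]
  slice_rhs 1 2 => rw [leftUnitor_inv_naturality]
  slice_rhs 2 3 => rw [whisker_exchange]
  slice_rhs 3 4 => rw [associator_naturality_right]
  slice_rhs 4 5 => rw [← MonoidalCategory.whiskerLeft_comp, ← MonoidalCategory.whiskerLeft_comp,
    eqToHom_trans, eqToHom_refl, MonoidalCategory.whiskerLeft_id, MonoidalCategory.whiskerLeft_id]
  simp

lemma eqToHom_comp_psi {X Y : C} (t : P.bar Y ⟶ P.bar X) :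
    eqToHom (P.bar_bar X) ≫ P.psi t = P.barHom t ≫ eqToHom (P.bar_bar Y) := by
  unfold psi
  simp only [MonoidalCategory.whiskerLeft_comp]
  slice_lhs 5 6 => rw [← MonoidalCategory.whiskerLeft_comp, ← whisker_exchange,
    MonoidalCategory.whiskerLeft_comp]
  slice_lhs 6 7 => rw [← MonoidalCategory.whiskerLeft_comp, P.coev_natural t,
    MonoidalCategory.whiskerLeft_comp]
  slice_lhs 1 2 => rw [leftUnitor_inv_naturality]
  slice_lhs 2 3 => rw [whisker_exchange]
  slice_lhs 3 4 => rw [associator_naturality_right]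
  slice_lhs 4 5 => rw [← MonoidalCategory.whiskerLeft_comp, ← MonoidalCategory.whiskerLeft_comp,
    eqToHom_trans, eqToHom_refl, MonoidalCategory.whiskerLeft_id, MonoidalCategory.whiskerLeft_id]
  simp only [Category.id_comp, Category.comp_id]
  slice_lhs 3 4 => rw [← associator_naturality_right]
  slice_lhs 2 3 => rw [← whisker_exchange]
  slice_lhs 1 2 => rw [← leftUnitor_inv_naturality]
  slice_lhs 2 6 => rw [P.zag']

lemma barHom_barHom {X Y : C} (s : X ⟶ Y) :
    P.barHom (P.barHom s) = eqToHom (P.bar_bar X) ≫ s ≫ eqToHom (P.bar_bar Y).symm := by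
  have h := P.eqToHom_comp_psi (P.barHom s)
  rw [P.psi_barHom] at h
  conv_rhs => rw [← Category.assoc, h]
  simp

lemma trL_cyclic {X Y : C} (f : X ⟶ Y) (g : Y ⟶ X) : P.trL (f ≫ g) = P.trL (g ≫ f) := by
  unfold trL
  rw [comp_whiskerRight, comp_whiskerRight]
  slice_lhs 1 2 => rw [P.ev_natural f]
  slice_lhs 3 4 => rw [P.coev_natural g]
  slice_rhs 1 2 => rw [P.ev_natural g]
  slice_rhs 2 3 => rw [whisker_exchange]
  slice_rhs 1 2 => rw [P.ev_natural f]
  simp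

lemma trR_eq_trL_barHom {X : C} (s : X ⟶ X) : P.trR s = P.trL (P.barHom s) := by
  unfold trL trR
  slice_rhs 1 2 => rw [P.ev_natural (P.barHom s)]
  rw [P.barHom_barHom]
  simp

lemma trR_cyclic {X Y : C} (f : X ⟶ Y) (g : Y ⟶ X) : P.trR (f ≫ g) = P.trR (g ≫ f) := by
  rw [P.trR_eq_trL_barHom, P.trR_eq_trL_barHom, P.barHom_comp, P.barHom_comp, P.trL_cyclic]

lemma trR_id (X : C) : P.trR (𝟙 X) = P.dim (P.bar X) := by
  unfold trR dim trL
  simp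


section LinearLemmas

variable [Preadditive C] [MonoidalPreadditive C]

lemma trL_sum {X : C} {J : Type*} (s : Finset J) (f : J → (X ⟶ X)) :
    P.trL (∑ i ∈ s, f i) = ∑ i ∈ s, P.trL (f i) := by
  simp [trL, CategoryTheory.sum_whiskerRight, Preadditive.sum_comp, Preadditive.comp_sum]

lemma trR_sum {X : C} {J : Type*} (s : Finset J) (f : J → (X ⟶ X)) :
    P.trR (∑ i ∈ s, f i) = ∑ i ∈ s, P.trR (f i) := by
  simp [trR, CategoryTheory.whiskerLeft_sum, Preadditive.sum_comp, Preadditive.comp_sum]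

variable {F : Type*} [Field F] [CategoryTheory.Linear F C] [MonoidalLinear F C]

lemma trL_smul (c : F) {X : C} (s : X ⟶ X) : P.trL (c • s) = c • P.trL s := by
  simp [trL, Linear.smul_comp, Linear.comp_smul]

lemma trR_smul (c : F) {X : C} (s : X ⟶ X) : P.trR (c • s) = c • P.trR s := by
  simp [trR, Linear.smul_comp, Linear.comp_smul]

end LinearLemmas

end PivotalData

/-- A semisimple `F`-linear pivotal category with simple unit is spherical if and only if
`d(X) = d(X̄)` for every object `X`. -/
theorem semisimple_pivotal_spherical_iff_dim_eq_dim_bar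
    {F : Type*} [Field F] {C : Type*} [Category C] [MonoidalCategory C]
    [Preadditive C] [CategoryTheory.Linear F C]
    [MonoidalPreadditive C] [MonoidalLinear F C]
    (P : PivotalData C)
    (hunit : ∀ f : 𝟙_ C ⟶ 𝟙_ C, ∃ c : F, f = c • 𝟙 (𝟙_ C))
    (hss : ∀ X : C, ∃ (n : ℕ) (S : Fin n → C) (u : ∀ i, S i ⟶ X) (u' : ∀ i, X ⟶ S i),
      (∀ i, ∀ f : S i ⟶ S i, ∃ c : F, f = c • 𝟙 (S i)) ∧
      (∑ i, u' i ≫ u i) = 𝟙 X ∧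
      (∀ i, u i ≫ u' i = 𝟙 (S i)) ∧
      (∀ i j, i ≠ j → u i ≫ u' j = 0)) :
    (∀ (X : C) (s : X ⟶ X), P.trL s = P.trR s) ↔ (∀ X : C, P.dim X = P.dim (P.bar X)) := by
  constructor
  · intro h X
    have h1 := h X (𝟙 X)
    rw [P.trR_id] at h1
    exact h1
  · intro hd X s
    obtain ⟨n, S, u, u', hsimp, hsum, -, -⟩ := hss X
    choose c hc using fun i => hsimp i (u i ≫ s ≫ u' i)
    have hdecomp : s = ∑ i, u' i ≫ (u i ≫ s) := by
      conv_lhs => rw [← Category.id_comp s, ← hsum]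
      rw [Preadditive.sum_comp]
      simp only [Category.assoc]
    have hL : P.trL s = ∑ i, c i • P.dim (S i) := by
      rw [hdecomp, P.trL_sum]
      refine Finset.sum_congr rfl fun i _ => ?_
      rw [P.trL_cyclic (u' i) (u i ≫ s), Category.assoc, hc i, P.trL_smul]
      rfl
    have hR : P.trR s = ∑ i, c i • P.dim (P.bar (S i)) := by
      rw [hdecomp, P.trR_sum]
      refine Finset.sum_congr rfl fun i _ => ?_
      rw [P.trR_cyclic (u' i) (u i ≫ s), Category.assoc, hc i, P.trR_smul, P.trR_id]
    rw [hL, hR]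
    exact Finset.sum_congr rfl fun i _ => by rw [hd (S i)]
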